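/- Let F⁻ be the closed segment in ℝ² from (−2/√3, 0) to (−1/√3, −1) and F⁺ the closed segment from (−2/√3, 0) to (−1/√3, 1) (the two facets of B^φ adjacent to the vertex (−2/√3, 0)). Then there exist no N₁ ∈ F⁻ and N₂ ∈ F⁺ with φ(N₁ + N₂) ≤ 1 and φ(N₁ − N₂) ≤ 1. (Consequently, the conical "X" quadruple junction admits no constant paired calibration: there are no vectors ξ₁, ξ₂, ξ₃, ξ₄ ∈ ℝ² with φ(ξᵢ − ξⱼ) ≤ 1 for all i, j and ξᵢ − ξ_{i+1} = Nᵢ, since the Cahn–Hoffman constraints force N₁ ∈ F⁻, N₂ ∈ F⁺, N₃ = −N₁, N₄ = −N₂, and then ξ₁ − ξ₃ = N₁ + N₂ and ξ₂ − ξ₄ = N₂ − N₁ cannot both lie in B^φ.) -/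

import Mathlib

/-- The crystalline norm `φ` whose unit ball is the regular hexagon circumscribed
to the unit circle with two horizontal facets. -/
noncomputable def phi (x : ℝ × ℝ) : ℝ :=
  max |x.2| (max (|Real.sqrt 3 * x.1 + x.2| / 2) (|Real.sqrt 3 * x.1 - x.2| / 2))

/-- No constant paired calibration for the conical "X" quadruple junction: there are no
`N₁` in the facet of `B^φ` from `(−2/√3, 0)` to `(−1/√3, −1)` and `N₂` in the facet from
`(−2/√3, 0)` to `(−1/√3, 1)` with both `N₁ + N₂` and `N₁ − N₂` in `B^φ`. -/
theorem no_constant_paired_calibration_X_junction :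
    ¬ ∃ N₁ N₂ : ℝ × ℝ,
      N₁ ∈ segment ℝ ((-(2 / Real.sqrt 3), 0) : ℝ × ℝ) ((-(1 / Real.sqrt 3), -1) : ℝ × ℝ) ∧
      N₂ ∈ segment ℝ ((-(2 / Real.sqrt 3), 0) : ℝ × ℝ) ((-(1 / Real.sqrt 3), 1) : ℝ × ℝ) ∧
      phi (N₁ + N₂) ≤ 1 ∧ phi (N₁ - N₂) ≤ 1 := by
  rintro ⟨N₁, N₂, ⟨a, b, ha, hb, hab, h1⟩, ⟨c, d, hc, hd, hcd, h2⟩, hplus, hminus⟩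
  have s3 : (0:ℝ) < Real.sqrt 3 := Real.sqrt_pos.mpr (by norm_num)
  have s3ne : Real.sqrt 3 ≠ 0 := ne_of_gt s3
  have hx1 : N₁.1 = a * (-(2 / Real.sqrt 3)) + b * (-(1 / Real.sqrt 3)) := by
    rw [← h1]; simp
  have hy1 : N₁.2 = -b := by rw [← h1]; simp
  have hx2 : N₂.1 = c * (-(2 / Real.sqrt 3)) + d * (-(1 / Real.sqrt 3)) := by
    rw [← h2]; simp
  have hy2 : N₂.2 = d := by rw [← h2]; simp
  have sq : Real.sqrt 3 ^ 2 = 3 := Real.sq_sqrt (by norm_num)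
  have k1 : Real.sqrt 3 * N₁.1 = -(2 * a + b) := by
    rw [hx1]; field_simp; ring
  have k2 : Real.sqrt 3 * N₂.1 = -(2 * c + d) := by
    rw [hx2]; field_simp; ring
  -- facet inequality from N₁ + N₂ : forces c = 0
  have hA : |Real.sqrt 3 * (N₁ + N₂).1 + (N₁ + N₂).2| / 2 ≤ 1 :=
    le_trans (le_trans (le_max_left _ _) (le_max_right _ _)) hplus
  have hA' : |(-(2 + 2 * c) : ℝ)| ≤ 2 := by
    have : Real.sqrt 3 * (N₁ + N₂).1 + (N₁ + N₂).2 = -(2 + 2 * c) := by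
      simp only [Prod.fst_add, Prod.snd_add, mul_add, k1, k2, hy1, hy2]
      linarith [hab, hcd]
    rw [this] at hA; linarith [hA]
  have hcz : c = 0 := by
    rcases abs_le.mp hA' with ⟨h, _⟩
    linarith
  -- facet inequality from N₁ + N₂ (other facet) : forces a = 0
  have hB : |Real.sqrt 3 * (N₁ + N₂).1 - (N₁ + N₂).2| / 2 ≤ 1 :=
    le_trans (le_trans (le_max_right _ _) (le_max_right _ _)) hplus
  have hB' : |(-(2 + 2 * a) : ℝ)| ≤ 2 := by
    have : Real.sqrt 3 * (N₁ + N₂).1 - (N₁ + N₂).2 = -(2 + 2 * a) := by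
      simp only [Prod.fst_add, Prod.snd_add, mul_add, k1, k2, hy1, hy2]
      linarith [hab, hcd]
    rw [this] at hB; linarith [hB]
  have haz : a = 0 := by
    rcases abs_le.mp hB' with ⟨h, _⟩
    linarith
  -- now N₁ - N₂ has second coordinate -2
  have hC : |(N₁ - N₂).2| ≤ 1 := le_trans (le_max_left _ _) hminus
  have : (N₁ - N₂).2 = -2 := by
    simp only [Prod.snd_sub, hy1, hy2]
    have hb1 : b = 1 := by linarith
    have hd1 : d = 1 := by linarith
    rw [hb1, hd1]; norm_num
  rw [this] at hC
  norm_num at hC
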